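/- Suppose (P) has a solution, i.e., there exists a finite supremizer (X̄, X̄^h) all of whose elements are maximizers (every x̄ ∈ X̄ is a maximizer of (P) and every x^h ∈ X̄^h is a maximizer of the homogeneous problem). Then there exists w in the interior of C⁺ and x̄ ∈ X such that x̄ is an optimal solution of (P1(w)), i.e., wᵀPᵀx̄ ≥ wᵀPᵀx for all x ∈ X. -/

import Mathlib

open Matrix Pointwise

/-- The conic hull of a set: all finite nonnegative combinations of its elements
(with `coneHull ∅ = {0}`, via the empty combination). -/
def coneHull {E : Type*} [AddCommMonoid E] [Module ℝ E] (S : Set E) : Set E :=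
  {v | ∃ (k : ℕ) (μ : Fin k → ℝ) (f : Fin k → E),
    (∀ i, 0 ≤ μ i) ∧ (∀ i, f i ∈ S) ∧ v = ∑ i, μ i • f i}

section ConeLemmas

variable {E : Type*} [AddCommGroup E] [Module ℝ E] {S : Set E}

lemma zero_mem_coneHull : (0 : E) ∈ coneHull S :=
  ⟨0, fun i => i.elim0, fun i => i.elim0, fun i => i.elim0, fun i => i.elim0, by simp⟩

lemma mem_coneHull_of_mem {x : E} (hx : x ∈ S) : x ∈ coneHull S :=
  ⟨1, fun _ => 1, fun _ => x, fun _ => zero_le_one, fun _ => hx, by simp⟩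

lemma smul_mem_coneHull {t : ℝ} (ht : 0 ≤ t) {x : E} (hx : x ∈ coneHull S) :
    t • x ∈ coneHull S := by
  obtain ⟨k, μ, f, hμ, hf, rfl⟩ := hx
  exact ⟨k, fun i => t * μ i, f, fun i => mul_nonneg ht (hμ i), hf, by
    simp [Finset.smul_sum, smul_smul]⟩

lemma add_mem_coneHull {x y : E} (hx : x ∈ coneHull S) (hy : y ∈ coneHull S) :
    x + y ∈ coneHull S := by
  obtain ⟨k₁, μ₁, f₁, hμ₁, hf₁, rfl⟩ := hx
  obtain ⟨k₂, μ₂, f₂, hμ₂, hf₂, rfl⟩ := hy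
  refine ⟨k₁ + k₂, Fin.addCases μ₁ μ₂, Fin.addCases f₁ f₂, ?_, ?_, ?_⟩
  · intro i
    refine Fin.addCases (fun j => ?_) (fun j => ?_) i <;> simp [hμ₁, hμ₂]
  · intro i
    refine Fin.addCases (fun j => ?_) (fun j => ?_) i <;> simp [hf₁, hf₂]
  · rw [Fin.sum_univ_add]
    simp

lemma convex_coneHull : Convex ℝ (coneHull S) := by
  intro x hx y hy a b ha hb _
  exact add_mem_coneHull (smul_mem_coneHull ha hx) (smul_mem_coneHull hb hy)

lemma finsetSum_mem_coneHull {s : Finset E} (hs : ↑s ⊆ S) {μ : E → ℝ}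
    (hμ : ∀ x ∈ s, 0 ≤ μ x) : ∑ x ∈ s, μ x • x ∈ coneHull S := by
  refine ⟨s.card, fun i => μ (s.equivFin.symm i), fun i => (s.equivFin.symm i : E),
    fun i => hμ _ (s.equivFin.symm i).2, fun i => hs (s.equivFin.symm i).2, ?_⟩
  rw [← Finset.sum_coe_sort s (fun x => μ x • x)]
  exact (Equiv.sum_comp s.equivFin.symm (fun x : s => μ (x : E) • (x : E))).symm

lemma coneHull_mem_finset_rep {z : E} (hz : z ∈ coneHull S) :
    ∃ s : Finset E, ↑s ⊆ S ∧ ∃ μ : E → ℝ, (∀ x, 0 ≤ μ x) ∧ z = ∑ x ∈ s, μ x • x := by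
  classical
  obtain ⟨k, μ, f, hμ, hf, rfl⟩ := hz
  refine ⟨Finset.image f Finset.univ, ?_,
    fun x => ∑ i ∈ Finset.univ.filter (fun i => f i = x), μ i,
    fun x => Finset.sum_nonneg fun i _ => hμ i, ?_⟩
  · intro x hx
    simp only [Finset.coe_image, Set.mem_image] at hx
    obtain ⟨i, _, rfl⟩ := hx
    exact hf i
  · refine Eq.symm ?_
    calc ∑ x ∈ Finset.image f Finset.univ,
          (∑ i ∈ Finset.univ.filter (fun i => f i = x), μ i) • x
        = ∑ x ∈ Finset.image f Finset.univ,
            ∑ i ∈ Finset.univ.filter (fun i => f i = x), μ i • x := by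
          simp [Finset.sum_smul]
      _ = ∑ x ∈ Finset.image f Finset.univ,
            ∑ i ∈ Finset.univ.filter (fun i => f i = x), μ i • f i := by
          refine Finset.sum_congr rfl fun x _ => Finset.sum_congr rfl fun i hi => ?_
          rw [(Finset.mem_filter.1 hi).2]
      _ = ∑ i, μ i • f i := Finset.sum_fiberwise_of_maps_to
            (fun i _ => Finset.mem_image_of_mem f (Finset.mem_univ i)) _

lemma cone_exchange {s : Finset E} {μ c : E → ℝ} (hμ : ∀ x ∈ s, 0 ≤ μ x)
    (hc : ∑ x ∈ s, c x • x = 0) {x₁ : E} (hx₁s : x₁ ∈ s) (hx₁ : 0 < c x₁) :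
    ∃ x₀ ∈ s, ∃ ν : E → ℝ, (∀ x ∈ s, 0 ≤ ν x) ∧ ν x₀ = 0 ∧
      ∑ x ∈ s, ν x • x = ∑ x ∈ s, μ x • x := by
  classical
  obtain ⟨x₀, hx₀mem, hx₀min⟩ := Finset.exists_min_image
    (s.filter fun x => 0 < c x) (fun x => μ x / c x)
    ⟨x₁, Finset.mem_filter.2 ⟨hx₁s, hx₁⟩⟩
  obtain ⟨hx₀s, hcx₀⟩ := Finset.mem_filter.1 hx₀mem
  set t := μ x₀ / c x₀ with htdef
  have ht0 : 0 ≤ t := div_nonneg (hμ _ hx₀s) hcx₀.le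
  refine ⟨x₀, hx₀s, fun x => μ x - t * c x, ?_, ?_, ?_⟩
  · intro x hxs
    show (0:ℝ) ≤ μ x - t * c x
    rcases le_or_gt (c x) 0 with h | h
    · have h2 : t * c x ≤ 0 := mul_nonpos_of_nonneg_of_nonpos ht0 h
      have := hμ x hxs
      linarith
    · have h2 := hx₀min x (Finset.mem_filter.2 ⟨hxs, h⟩)
      have h3 : t * c x ≤ μ x := (le_div_iff₀ h).1 h2
      linarith
  · simp only [htdef]
    rw [div_mul_cancel₀ _ (ne_of_gt hcx₀)]
    ring
  · simp only [sub_smul, mul_smul]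
    rw [Finset.sum_sub_distrib, ← Finset.smul_sum, hc, smul_zero, sub_zero]

lemma cone_caratheodory (s : Finset E) :
    ∀ μ : E → ℝ, (∀ x ∈ s, 0 ≤ μ x) →
      ∃ t : Finset E, t ⊆ s ∧ LinearIndependent ℝ (fun x : t => (x : E)) ∧
        ∃ ν : E → ℝ, (∀ x ∈ t, 0 ≤ ν x) ∧ ∑ x ∈ t, ν x • x = ∑ x ∈ s, μ x • x := by
  classical
  induction s using Finset.strongInduction with
  | _ s ih =>
    intro μ hμ
    by_cases hli : LinearIndependent ℝ (fun x : s => (x : E))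
    · exact ⟨s, subset_rfl, hli, μ, hμ, rfl⟩
    rw [Fintype.not_linearIndependent_iff] at hli
    obtain ⟨g, hg0, i, hgi⟩ := hli
    have key : ∃ c : E → ℝ, (∑ x ∈ s, c x • x = 0) ∧ ∃ x₁ ∈ s, 0 < c x₁ := by
      set c : E → ℝ := fun x => if h : x ∈ s then g ⟨x, h⟩ else 0 with hcdef
      have hcs : ∑ x ∈ s, c x • x = 0 := by
        rw [← Finset.sum_coe_sort s (fun x => c x • x), ← hg0]
        refine Finset.sum_congr rfl fun x _ => ?_
        simp [hcdef, x.2]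
      rcases lt_or_ge 0 (c (i : E)) with h | h
      · exact ⟨c, hcs, (i : E), i.2, h⟩
      · refine ⟨-c, ?_, (i : E), i.2, ?_⟩
        · simp only [Pi.neg_apply, neg_smul]
          rw [Finset.sum_neg_distrib, hcs, neg_zero]
        · have hne : c (i : E) ≠ 0 := by simpa [hcdef, i.2] using hgi
          simp only [Pi.neg_apply]
          cases h.lt_or_eq with
          | inl h => linarith
          | inr h => exact absurd h hne
    obtain ⟨c, hcs, x₁, hx₁s, hx₁⟩ := key
    obtain ⟨x₀, hx₀s, ν, hν, hν₀, hνsum⟩ := cone_exchange hμ hcs hx₁s hx₁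
    obtain ⟨t, hts, hlit, ρ, hρ, hρsum⟩ := ih (s.erase x₀) (Finset.erase_ssubset hx₀s) ν
      (fun x hx => hν x (Finset.mem_of_mem_erase hx))
    refine ⟨t, hts.trans (Finset.erase_subset _ _), hlit, ρ, hρ, ?_⟩
    rw [hρsum, Finset.sum_erase _ (by rw [hν₀, zero_smul]), hνsum]

end ConeLemmas
section Closedness

variable {E : Type*} [NormedAddCommGroup E] [NormedSpace ℝ E] [FiniteDimensional ℝ E]

lemma isClosed_coneHull_finite {S : Set E} (hS : S.Finite) : IsClosed (coneHull S) := by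
  classical
  let L : (t : Finset E) → (↥t → ℝ) →ₗ[ℝ] E := fun t =>
    Fintype.linearCombination ℝ (fun x : t => (x : E))
  let K : Finset E → Set E := fun t => (L t) '' {μ | ∀ x, 0 ≤ μ x}
  have hKclosed : ∀ t : Finset E, LinearIndependent ℝ (fun x : t => (x : E)) →
      IsClosed (K t) := by
    intro t hli
    have hker : LinearMap.ker (L t) = ⊥ := by
      rw [LinearMap.ker_eq_bot']
      intro μ hμ
      rw [show L t μ = ∑ x : t, μ x • (x : E) from rfl] at hμ
      exact funext (Fintype.linearIndependent_iff.1 hli μ hμ)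
    have hemb := LinearMap.isClosedEmbedding_of_injective hker
    have hQ : IsClosed {μ : ↥t → ℝ | ∀ x, 0 ≤ μ x} := by
      have h2 : {μ : ↥t → ℝ | ∀ x, 0 ≤ μ x} =
          ⋂ x, (fun μ : ↥t → ℝ => μ x) ⁻¹' Set.Ici 0 := by
        ext μ; simp [Set.mem_iInter]
      rw [h2]
      exact isClosed_iInter fun x => IsClosed.preimage (continuous_apply x) isClosed_Ici
    exact hemb.isClosedMap _ hQ
  let D : Finset E → Set E := fun t =>
    if LinearIndependent ℝ (fun x : t => (x : E)) then K t else {0}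
  have main : coneHull S = ⋃ t ∈ hS.toFinset.powerset, D t := by
    ext z
    constructor
    · intro hz
      obtain ⟨s, hsS, μ, hμ, rfl⟩ := coneHull_mem_finset_rep hz
      obtain ⟨t, hts, hli, ν, hν, hsum⟩ := cone_caratheodory s μ (fun x _ => hμ x)
      refine Set.mem_biUnion (Finset.mem_powerset.2 fun x hx => hS.mem_toFinset.2
        (hsS (hts hx))) ?_
      show _ ∈ D t
      rw [show D t = K t from if_pos hli]
      refine ⟨fun x : t => ν (x : E), fun x => hν _ x.2, ?_⟩
      show ∑ x : t, ν (x : E) • (x : E) = _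
      rw [Finset.sum_coe_sort t (fun x => ν x • x)]
      exact hsum
    · intro hz
      simp only [Set.mem_iUnion] at hz
      obtain ⟨t, ht, hzt⟩ := hz
      by_cases hli : LinearIndependent ℝ (fun x : t => (x : E))
      · rw [show D t = K t from if_pos hli] at hzt
        obtain ⟨μ, hμ, rfl⟩ := hzt
        have htS : (t : Set E) ⊆ S := fun x hx =>
          hS.mem_toFinset.1 (Finset.mem_powerset.1 ht hx)
        have : L t μ = ∑ x ∈ t, (fun y => if h : y ∈ t then μ ⟨y, h⟩ else 0) x • x := by
          show ∑ x : t, μ x • (x : E) = _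
          rw [← Finset.sum_coe_sort t
            (fun x => (fun y => if h : y ∈ t then μ ⟨y, h⟩ else 0) x • x)]
          refine Finset.sum_congr rfl fun x _ => ?_
          simp [x.2]
        rw [this]
        refine finsetSum_mem_coneHull htS fun x hx => ?_
        simp only [dif_pos hx]
        exact hμ _
      · rw [show D t = {0} from if_neg hli] at hzt
        rw [Set.mem_singleton_iff.1 hzt]
        exact zero_mem_coneHull
  rw [main]
  exact isClosed_biUnion_finset fun t _ => by
    by_cases hli : LinearIndependent ℝ (fun x : t => (x : E))
    · rw [show D t = K t from if_pos hli]; exact hKclosed t hli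
    · rw [show D t = {0} from if_neg hli]; exact isClosed_singleton

end Closedness

section DotHelpers

variable {q : ℕ}

lemma continuous_dot_right (c : Fin q → ℝ) :
    Continuous fun z : Fin q → ℝ => z ⬝ᵥ c := by
  simp only [dotProduct]
  exact continuous_finset_sum _ fun i _ => (continuous_apply i).mul continuous_const

lemma dot_sum_right (z : Fin q → ℝ) {ι : Type*} (s : Finset ι) (u : ι → Fin q → ℝ) :
    z ⬝ᵥ (∑ i ∈ s, u i) = ∑ i ∈ s, z ⬝ᵥ u i := by
  simp only [dotProduct, Finset.sum_apply, Finset.mul_sum]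
  rw [Finset.sum_comm]

lemma dot_neg_clm (f : (Fin q → ℝ) →L[ℝ] ℝ) (y : Fin q → ℝ) :
    (fun j => -f (Pi.single j 1)) ⬝ᵥ y = -f y := by
  have hy : y = ∑ j, y j • (Pi.single j 1 : Fin q → ℝ) := by
    conv_lhs => rw [← Finset.univ_sum_single y]
    refine Finset.sum_congr rfl fun j _ => ?_
    rw [← Pi.single_smul, smul_eq_mul, mul_one]
  conv_rhs => rw [hy]
  rw [map_sum]
  simp only [_root_.map_smul, smul_eq_mul, dotProduct, ← Finset.sum_neg_distrib]
  exact Finset.sum_congr rfl fun j _ => by ring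

end DotHelpers
lemma mulVec_finset_sum {m n : ℕ} (A : Matrix (Fin m) (Fin n) ℝ) {ι : Type*}
    (s : Finset ι) (u : ι → Fin n → ℝ) :
    A.mulVec (∑ i ∈ s, u i) = ∑ i ∈ s, A.mulVec (u i) := by
  rw [← Matrix.mulVecLin_apply, map_sum]
  simp [Matrix.mulVecLin_apply]

/-- If (P) has a solution (a finite supremizer consisting of maximizers), then there
exist w in the interior of C⁺ and x̄ ∈ X such that x̄ is optimal for (P1(w)). -/
theorem exists_interior_weight_with_optimal_solution
    (n m q : ℕ) (hn : 0 < n) (hm : 0 < m) (hq : 0 < q)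
    (P : Matrix (Fin n) (Fin q) ℝ) (A : Matrix (Fin m) (Fin n) ℝ) (b : Fin m → ℝ)
    (C : Set (Fin q → ℝ))
    (hC0 : {(0 : Fin q → ℝ)} ⊂ C) (hCuniv : C ≠ Set.univ)
    (hCpoly : ∃ (k : ℕ) (Y : Fin k → Fin q → ℝ),
      C = {v | ∃ μ : Fin k → ℝ, (∀ i, 0 ≤ μ i) ∧ v = ∑ i, μ i • Y i})
    (hCpointed : ∀ v ∈ C, -v ∈ C → v = 0)
    (hCsolid : (interior C).Nonempty)
    (X : Set (Fin n → ℝ)) (hX : X = {x | A.mulVec x ≤ b ∧ 0 ≤ x})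
    (Xh : Set (Fin n → ℝ)) (hXh : Xh = {x | A.mulVec x ≤ 0 ∧ 0 ≤ x})
    (hsol : ∃ Xbar Xbarh : Set (Fin n → ℝ),
      Xbar.Finite ∧ Xbar.Nonempty ∧ Xbar ⊆ X ∧
      Xbarh.Finite ∧ Xbarh ⊆ Xh \ {0} ∧
      (convexHull ℝ (P.transpose.mulVec '' Xbar)
          + coneHull (P.transpose.mulVec '' Xbarh) - C
        = (P.transpose.mulVec '' X) - C) ∧
      (∀ xbar ∈ Xbar,
        ({P.transpose.mulVec xbar} + (C \ {0})) ∩ (P.transpose.mulVec '' X) = ∅) ∧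
      (∀ xh ∈ Xbarh,
        ({P.transpose.mulVec xh} + (C \ {0})) ∩ (P.transpose.mulVec '' Xh) = ∅)) :
    ∃ w ∈ interior {z : Fin q → ℝ | ∀ y ∈ C, 0 ≤ z ⬝ᵥ y},
      ∃ xbar ∈ X, ∀ x ∈ X,
        w ⬝ᵥ P.transpose.mulVec x ≤ w ⬝ᵥ P.transpose.mulVec xbar := by
  classical
  obtain ⟨k, Y, hCrep⟩ := hCpoly
  obtain ⟨Xbar, Xbarh, hXbarFin, hXbarNe, hXbarX, hXbarhFin, hXbarhXh, hsum, hmax, hmaxh⟩ := hsol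
  have hC_zero : (0 : Fin q → ℝ) ∈ C := hC0.subset (Set.mem_singleton 0)
  have hCmem : ∀ y : Fin q → ℝ,
      y ∈ C ↔ ∃ μ : Fin k → ℝ, (∀ i, 0 ≤ μ i) ∧ y = ∑ i, μ i • Y i := by
    intro y; rw [hCrep]; exact Iff.rfl
  have hYC : ∀ i, Y i ∈ C := by
    intro i
    rw [hCmem]
    refine ⟨fun j => if j = i then 1 else 0, fun j => by dsimp only; split <;> norm_num, ?_⟩
    simp [ite_smul]
  have hCadd : ∀ a ∈ C, ∀ b ∈ C, a + b ∈ C := by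
    intro a ha b hb
    rw [hCmem] at ha hb ⊢
    obtain ⟨μ, hμ, rfl⟩ := ha
    obtain ⟨ν, hν, rfl⟩ := hb
    exact ⟨μ + ν, fun i => add_nonneg (hμ i) (hν i), by
      simp [add_smul, Finset.sum_add_distrib]⟩
  have hCsmul : ∀ t : ℝ, 0 ≤ t → ∀ a ∈ C, t • a ∈ C := by
    intro t ht a ha
    rw [hCmem] at ha ⊢
    obtain ⟨μ, hμ, rfl⟩ := ha
    exact ⟨fun i => t * μ i, fun i => mul_nonneg ht (hμ i), by
      simp [Finset.smul_sum, smul_smul]⟩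
  have hCsum : ∀ {ι : Type} (s : Finset ι) (wt : ι → ℝ) (zv : ι → Fin q → ℝ),
      (∀ i ∈ s, 0 ≤ wt i) → (∀ i ∈ s, zv i ∈ C) → ∑ i ∈ s, wt i • zv i ∈ C := by
    intro ι s wt zv hwt hzv
    exact Finset.sum_induction _ (· ∈ C) (fun a b ha hb => hCadd a ha b hb) hC_zero
      (fun i hi => hCsmul _ (hwt i hi) _ (hzv i hi))
  have hCconvex : Convex ℝ C := fun x hx y hy a b' ha hb' _ =>
    hCadd _ (hCsmul _ ha _ hx) _ (hCsmul _ hb' _ hy)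
  -- the homogeneous image set
  set V : Set (Fin q → ℝ) := P.transpose.mulVec '' Xbarh with hVdef
  have hVfin : V.Finite := hXbarhFin.image _
  -- key fact: the cone over V meets C only at 0
  have hF : ∀ a ∈ coneHull V, a ∈ C → a = 0 := by
    intro a haD haC
    by_contra ha0
    obtain ⟨k', μ, g0, hμ, hg, rfl⟩ := haD
    choose xg hxg hPxg using hg
    have hk' : k' ≠ 0 := by
      rintro rfl
      simp at ha0
    have i₀ : Fin k' := ⟨0, Nat.pos_of_ne_zero hk'⟩
    have hxgXh : ∀ i, A.mulVec (xg i) ≤ 0 ∧ 0 ≤ xg i := by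
      intro i
      have h1 := (hXbarhXh (hxg i)).1
      rw [hXh] at h1
      exact h1
    set xnew := xg i₀ + ∑ i, μ i • xg i with hxnewdef
    have hxnewXh : xnew ∈ Xh := by
      rw [hXh]
      have hlin : A.mulVec xnew = A.mulVec (xg i₀) + ∑ i, μ i • A.mulVec (xg i) := by
        rw [hxnewdef, Matrix.mulVec_add, mulVec_finset_sum]
        congr 1
        exact Finset.sum_congr rfl fun i _ => Matrix.mulVec_smul A (μ i) (xg i)
      constructor
      · rw [Pi.le_def]
        intro j
        rw [hlin]
        simp only [Pi.add_apply, Finset.sum_apply, Pi.smul_apply, smul_eq_mul, Pi.zero_apply]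
        exact add_nonpos (Pi.le_def.1 (hxgXh i₀).1 j)
          (Finset.sum_nonpos fun i _ =>
            mul_nonpos_of_nonneg_of_nonpos (hμ i) (Pi.le_def.1 (hxgXh i).1 j))
      · rw [Pi.le_def]
        intro j
        rw [hxnewdef]
        simp only [Pi.add_apply, Finset.sum_apply, Pi.smul_apply, smul_eq_mul, Pi.zero_apply]
        exact add_nonneg (Pi.le_def.1 (hxgXh i₀).2 j)
          (Finset.sum_nonneg fun i _ => mul_nonneg (hμ i) (Pi.le_def.1 (hxgXh i).2 j))
    have hPtxnew : P.transpose.mulVec xnew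
        = P.transpose.mulVec (xg i₀) + ∑ i, μ i • g0 i := by
      rw [hxnewdef, Matrix.mulVec_add, mulVec_finset_sum]
      congr 1
      refine Finset.sum_congr rfl fun i _ => ?_
      rw [Matrix.mulVec_smul, hPxg]
    have hcontr := hmaxh (xg i₀) (hxg i₀)
    rw [Set.eq_empty_iff_forall_notMem] at hcontr
    refine hcontr (P.transpose.mulVec xnew) ⟨?_, ⟨xnew, hxnewXh, rfl⟩⟩
    rw [hPtxnew]
    exact Set.add_mem_add (Set.mem_singleton _) ⟨haC, by simpa using ha0⟩
  -- the compact convex set of nonzero generators of C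
  set GY : Set (Fin q → ℝ) := Y '' {i | Y i ≠ 0} with hGYdef
  have hGYfin : GY.Finite := (Set.toFinite _).image Y
  have hTC : convexHull ℝ GY ⊆ C :=
    convexHull_min (by rintro y ⟨i, _, rfl⟩; exact hYC i) hCconvex
  have hdisj : Disjoint (convexHull ℝ GY) (coneHull V) := by
    rw [Set.disjoint_left]
    intro a haT haD
    have ha0 : a = 0 := hF a haD (hTC haT)
    subst ha0
    rw [convexHull_eq] at haT
    obtain ⟨ι, t, wgt, zf, hw, hw1, hz, hcm⟩ := haT
    rw [Finset.centerMass_eq_of_sum_1 _ _ hw1] at hcm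
    have hex : ∃ i ∈ t, 0 < wgt i := by
      by_contra h
      push_neg at h
      have h0 : ∑ i ∈ t, wgt i = 0 :=
        Finset.sum_eq_zero fun i hi => le_antisymm (h i hi) (hw i hi)
      rw [hw1] at h0
      norm_num at h0
    obtain ⟨i₀, hi₀t, hwi₀⟩ := hex
    have hzC : zf i₀ ∈ C := by
      obtain ⟨iY, _, hiY2⟩ := hz i₀ hi₀t
      exact hiY2 ▸ hYC iY
    have hyC : wgt i₀ • zf i₀ ∈ C := hCsmul _ hwi₀.le _ hzC
    have hnegC : -(wgt i₀ • zf i₀) ∈ C := by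
      have hsplit : (∑ i ∈ t.erase i₀, wgt i • zf i) + wgt i₀ • zf i₀ = 0 := by
        rw [Finset.sum_erase_add _ _ hi₀t]
        exact hcm
      rw [← eq_neg_of_add_eq_zero_left hsplit]
      exact hCsum _ _ _ (fun i hi => hw i (Finset.mem_of_mem_erase hi))
        (fun i hi => by
          obtain ⟨iY, _, hiY2⟩ := hz i (Finset.mem_of_mem_erase hi)
          exact hiY2 ▸ hYC iY)
    have hzero := hCpointed _ hyC hnegC
    rw [smul_eq_zero] at hzero
    rcases hzero with h | h
    · exact absurd h hwi₀.ne'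
    · obtain ⟨iY, hiY1, hiY2⟩ := hz i₀ hi₀t
      rw [← hiY2] at h
      exact hiY1 h
  -- separation
  obtain ⟨f, u, v, hfT, huv, hfD⟩ := _root_.geometric_hahn_banach_compact_closed
    (convex_convexHull ℝ GY) (hGYfin.isCompact_convexHull (𝕜 := ℝ)) convex_coneHull
    (isClosed_coneHull_finite hVfin) hdisj
  have hv0 : v < 0 := by
    have := hfD 0 zero_mem_coneHull
    simpa using this
  have hfD0 : ∀ d ∈ coneHull V, (0 : ℝ) ≤ f d := by
    intro d hd
    by_contra h
    push_neg at h
    have hε : 0 < 2 * v / f d := div_pos_of_neg_of_neg (by linarith) h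
    have h2 := hfD _ (smul_mem_coneHull hε.le hd)
    rw [ContinuousLinearMap.map_smul, smul_eq_mul, div_mul_cancel₀ _ (ne_of_lt h)] at h2
    linarith
  set w : Fin q → ℝ := fun j => -f (Pi.single j 1) with hwdef
  have hwdot : ∀ y, w ⬝ᵥ y = -f y := dot_neg_clm f
  have hwY : ∀ i, Y i ≠ 0 → 0 < w ⬝ᵥ Y i := by
    intro i hi
    have := hfT _ (subset_convexHull ℝ GY ⟨i, hi, rfl⟩)
    rw [hwdot]
    linarith
  have hwV : ∀ y ∈ V, w ⬝ᵥ y ≤ 0 := by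
    intro y hy
    rw [hwdot]
    linarith [hfD0 y (mem_coneHull_of_mem hy)]
  -- the open neighbourhood inside the dual cone
  set U : Set (Fin q → ℝ) := {z | ∀ i, Y i ≠ 0 → 0 < z ⬝ᵥ Y i} with hUdef
  have hUopen : IsOpen U := by
    have hU2 : U = ⋂ i, {z : Fin q → ℝ | Y i ≠ 0 → 0 < z ⬝ᵥ Y i} := by
      ext z; simp [hUdef, Set.mem_iInter]
    rw [hU2]
    refine isOpen_iInter_of_finite fun i => ?_
    by_cases h : Y i = 0
    · simp [h]
    · have h3 : {z : Fin q → ℝ | Y i ≠ 0 → 0 < z ⬝ᵥ Y i}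
          = (fun z : Fin q → ℝ => z ⬝ᵥ Y i) ⁻¹' Set.Ioi 0 := by
        ext z; simp [h]
      rw [h3]
      exact (continuous_dot_right (Y i)).isOpen_preimage _ isOpen_Ioi
  have hUsub : U ⊆ {z : Fin q → ℝ | ∀ y ∈ C, 0 ≤ z ⬝ᵥ y} := by
    intro z hz y hy
    rw [hCmem] at hy
    obtain ⟨μ, hμ, rfl⟩ := hy
    rw [dot_sum_right]
    refine Finset.sum_nonneg fun i _ => ?_
    rw [dotProduct_smul, smul_eq_mul]
    by_cases h : Y i = 0
    · simp [h]
    · exact mul_nonneg (hμ i) (hz i h).le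
  have hwU : w ∈ U := hwY
  -- the maximizer over Xbar
  obtain ⟨xstar, hxstar, hxstarmax⟩ := Set.exists_max_image Xbar
    (fun x => w ⬝ᵥ P.transpose.mulVec x) hXbarFin hXbarNe
  refine ⟨w, interior_maximal hUsub hUopen hwU, xstar, hXbarX hxstar, ?_⟩
  intro x hxX
  have hmem : P.transpose.mulVec x ∈ P.transpose.mulVec '' X - C := by
    have := Set.sub_mem_sub (Set.mem_image_of_mem P.transpose.mulVec hxX) hC_zero
    rwa [sub_zero] at this
  rw [← hsum] at hmem
  obtain ⟨p, hp, c, hc, hpc⟩ := Set.mem_sub.1 hmem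
  obtain ⟨aa, haa, bb, hbb, hab⟩ := Set.mem_add.1 hp
  have haaB : w ⬝ᵥ aa ≤ w ⬝ᵥ P.transpose.mulVec xstar := by
    have hsubhalf : convexHull ℝ (P.transpose.mulVec '' Xbar)
        ⊆ {y | w ⬝ᵥ y ≤ w ⬝ᵥ P.transpose.mulVec xstar} := by
      refine convexHull_min ?_ (convex_halfSpace_le
        ⟨fun y z => dotProduct_add w y z, fun t y => dotProduct_smul t w y⟩ _)
      rintro y ⟨xb, hxb, rfl⟩
      exact hxstarmax xb hxb
    exact hsubhalf haa
  have hbbB : w ⬝ᵥ bb ≤ 0 := by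
    obtain ⟨k2, μ2, g2, hμ2, hg2, rfl⟩ := hbb
    rw [dot_sum_right]
    refine Finset.sum_nonpos fun i _ => ?_
    rw [dotProduct_smul, smul_eq_mul]
    exact mul_nonpos_of_nonneg_of_nonpos (hμ2 i) (hwV _ (hg2 i))
  have hcB : (0 : ℝ) ≤ w ⬝ᵥ c := hUsub hwU c hc
  have hsplit : w ⬝ᵥ P.transpose.mulVec x = w ⬝ᵥ aa + w ⬝ᵥ bb - w ⬝ᵥ c := by
    rw [← hpc, ← hab, dotProduct_sub, dotProduct_add]
  rw [hsplit]
  linarith
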